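/- Let (X,T) be a topological dynamical system. If x ∈ X is F_ps-product recurrent, then x is a minimal point. -/

import Mathlib

open Set Filter Topology Function

namespace PaperFormal

/-- The return-time set `N(x,U) = {n ∈ ℤ₊ : Tⁿ x ∈ U}`. -/
def retTimes {X : Type} (T : X → X) (x : X) (U : Set X) : Set ℕ :=
  {n : ℕ | T^[n] x ∈ U}

/-- A point is recurrent if `N(x,U)` is infinite for every neighborhood `U` of `x`. -/
def RecurrentPt {X : Type} [TopologicalSpace X] (T : X → X) (x : X) : Prop :=
  ∀ U ∈ nhds x, (retTimes T x U).Infinite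

/-- The (forward) orbit closure of a point. -/
def orbitClosure {X : Type} [TopologicalSpace X] (T : X → X) (x : X) : Set X :=
  closure (Set.range fun n : ℕ => T^[n] x)

/-- A pair `(x,y)` is proximal if `lim T^{nᵢ} x = lim T^{nᵢ} y` along some sequence `nᵢ`. -/
def ProximalPair {X : Type} [TopologicalSpace X] (T : X → X) (x y : X) : Prop :=
  ∃ (u : ℕ → ℕ) (z : X),
    Tendsto (fun i => T^[u i] x) atTop (nhds z) ∧
    Tendsto (fun i => T^[u i] y) atTop (nhds z)

/-- A point `x` is distal if every `y` in its orbit closure proximal to `x` equals `x`. -/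
def DistalPt {X : Type} [TopologicalSpace X] (T : X → X) (x : X) : Prop :=
  ∀ y ∈ orbitClosure T x, ProximalPair T x y → y = x

/-- `A` is a minimal set: nonempty, closed, invariant, with no proper such subset. -/
def IsMinimalSet {X : Type} [TopologicalSpace X] (T : X → X) (A : Set X) : Prop :=
  A.Nonempty ∧ IsClosed A ∧ Set.MapsTo T A A ∧
    ∀ B ⊆ A, B.Nonempty → IsClosed B → Set.MapsTo T B B → B = A

/-- A point is minimal (almost periodic) if its orbit closure is a minimal set. -/
def IsMinimalPt {X : Type} [TopologicalSpace X] (T : X → X) (x : X) : Prop :=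
  IsMinimalSet T (orbitClosure T x)

/-- A minimal system: no proper nonempty closed invariant subset. -/
def MinimalSys {X : Type} [TopologicalSpace X] (T : X → X) : Prop :=
  ∀ B : Set X, B.Nonempty → IsClosed B → Set.MapsTo T B B → B = Set.univ

/-- A transitive system: `N(U,V)` is infinite for all opene `U`, `V`. -/
def TransitiveSys {X : Type} [TopologicalSpace X] (T : X → X) : Prop :=
  ∀ U V : Set X, IsOpen U → IsOpen V → U.Nonempty → V.Nonempty →
    {n : ℕ | (U ∩ T^[n] ⁻¹' V).Nonempty}.Infinite

/-- Transitivity of the subsystem on an invariant subset `A` (relative open sets). -/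
def TransitiveOn {X : Type} [TopologicalSpace X] (T : X → X) (A : Set X) : Prop :=
  ∀ U V : Set X, IsOpen U → IsOpen V → (U ∩ A).Nonempty → (V ∩ A).Nonempty →
    {n : ℕ | (U ∩ A ∩ T^[n] ⁻¹' V).Nonempty}.Infinite

/-- A transitive point: a point with dense forward orbit. -/
def TransPt {X : Type} [TopologicalSpace X] (T : X → X) (x : X) : Prop :=
  Dense (Set.range fun n : ℕ => T^[n] x)

/-- Finite sums of the sequence `p` over nonempty finite index sets contained in `[n,∞)`. -/
def FSfrom (p : ℕ → ℕ) (n : ℕ) : Set ℕ :=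
  {m | ∃ α : Finset ℕ, α.Nonempty ∧ (∀ i ∈ α, n ≤ i) ∧ m = ∑ i ∈ α, p i}

/-- Finite sums of the sequence `p` over nonempty finite index sets. -/
def FS (p : ℕ → ℕ) : Set ℕ := FSfrom p 0

/-- An IP set: a set containing all finite sums of some sequence of natural numbers. -/
def IPSet (A : Set ℕ) : Prop :=
  ∃ p : ℕ → ℕ, (∀ i, 0 < p i) ∧ FS p ⊆ A

/-- An IP* set: a set meeting every IP set. -/
def IPStar (A : Set ℕ) : Prop :=
  ∀ B : Set ℕ, IPSet B → (A ∩ B).Nonempty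

/-- A syndetic set: a set with bounded gaps. -/
def Syndetic (S : Set ℕ) : Prop :=
  ∃ N : ℕ, ∀ m : ℕ, ∃ k ∈ S, m ≤ k ∧ k ≤ m + N

/-- A thick set: a set containing arbitrarily long runs of consecutive integers. -/
def Thick (S : Set ℕ) : Prop :=
  ∀ n : ℕ, ∃ m : ℕ, ∀ i ≤ n, m + i ∈ S

/-- A piecewise syndetic set: an intersection of a syndetic set with a thick set. -/
def PiecewiseSyndetic (A : Set ℕ) : Prop :=
  ∃ S₁ S₂ : Set ℕ, Syndetic S₁ ∧ Thick S₂ ∧ A = S₁ ∩ S₂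

/-- A thickly syndetic set: a set meeting every piecewise syndetic set. -/
def ThicklySyndetic (A : Set ℕ) : Prop :=
  ∀ B : Set ℕ, PiecewiseSyndetic B → (A ∩ B).Nonempty

/-- `x` is `F`-recurrent for the family `F` if `N(x,U) ∈ F` for every neighborhood `U`. -/
def FRecurrentPt {X : Type} [TopologicalSpace X] (F : Set (Set ℕ)) (T : X → X) (x : X) :
    Prop :=
  ∀ U ∈ nhds x, retTimes T x U ∈ F

/-- `x` is `F`-product recurrent: `(x,y)` is recurrent for every `F`-recurrent point `y`
in any topological dynamical system `(Y,S)`. -/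
def FProductRecurrent {X : Type} [TopologicalSpace X] (F : Set (Set ℕ)) (T : X → X)
    (x : X) : Prop :=
  ∀ (Y : Type) [MetricSpace Y] [CompactSpace Y] (S : Y → Y),
    Continuous S → Function.Surjective S →
      ∀ y : Y, FRecurrentPt F S y → RecurrentPt (Prod.map T S) (x, y)

/-- A joining of `(X,T)` and `(Y,S)`: a nonempty closed invariant subset of `X × Y`
projecting onto both coordinates. -/
def Joining {X Y : Type} [TopologicalSpace X] [TopologicalSpace Y]
    (T : X → X) (S : Y → Y) (J : Set (X × Y)) : Prop :=
  J.Nonempty ∧ IsClosed J ∧ Set.MapsTo (Prod.map T S) J J ∧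
    Prod.fst '' J = Set.univ ∧ Prod.snd '' J = Set.univ

/-- Two systems are disjoint if their only joining is the full product. -/
def DisjointSys {X Y : Type} [TopologicalSpace X] [TopologicalSpace Y]
    (T : X → X) (S : Y → Y) : Prop :=
  ∀ J : Set (X × Y), Joining T S J → J = Set.univ

/-- Property (★) of a point: for each neighborhood `V` of `x` there is `n` such that for
every finite set `S` whose distinct elements are at distance `≥ n`, some common shift `ℓ`
puts all of `T^{s+ℓ} x`, `s ∈ S`, inside `V`. -/
def StarProp {X : Type} [TopologicalSpace X] (T : X → X) (x : X) : Prop :=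
  ∀ V ∈ nhds x, ∃ n : ℕ, ∀ S : Finset ℕ,
    (∀ s ∈ S, ∀ t ∈ S, s < t → n ≤ t - s) →
      ∃ ℓ : ℕ, ∀ s ∈ S, T^[s + ℓ] x ∈ V

/-- `F` is an independence set for the pair `(U₀, U₁)`. -/
def IndepSet {X : Type} (T : X → X) (U₀ U₁ : Set X) (F : Set ℕ) : Prop :=
  ∀ J : Finset ℕ, ↑J ⊆ F → J.Nonempty → ∀ s : ℕ → Bool,
    (⋂ j ∈ J, T^[j] ⁻¹' (if s j then U₁ else U₀)).Nonempty


/-! ### Auxiliary material for Statement 6 -/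

section Aux6

/-- A metric on `Bool` (to be re-anchored to the canonical topology). -/
noncomputable def boolDist : MetricSpace Bool :=
  MetricSpace.induced (fun b => if b then (1:ℝ) else 0)
    (by intro a b; cases a <;> cases b <;> simp) inferInstance

lemma boolDist_top :
    (instTopologicalSpaceBool : TopologicalSpace Bool)
      = boolDist.toUniformSpace.toTopologicalSpace := by
  refine Eq.symm (eq_bot_of_singletons_open fun b => ?_)
  refine (@Metric.isOpen_singleton_iff Bool boolDist.toPseudoMetricSpace b).2
    ⟨1/2, by norm_num, fun y hy => ?_⟩
  have hy' : dist (if y then (1:ℝ) else 0) (if b then (1:ℝ) else 0) < 1/2 := hy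
  cases y <;> cases b <;> first
    | rfl
    | (exfalso; rw [Real.dist_eq] at hy'; norm_num at hy')

/-- The discrete metric on `Bool`, compatible with the canonical topology. -/
noncomputable instance boolMS : MetricSpace Bool := boolDist.replaceTopology boolDist_top

/-- A compatible metric on the Cantor space `ℕ → Bool`. -/
noncomputable instance cantorMS : MetricSpace (ℕ → Bool) :=
  PiCountable.metricSpace.replaceTopology rfl

/-- Every neighborhood of a point of Cantor space contains a cylinder. -/
lemma cylinder_mem_of_nhds (y : ℕ → Bool) (V : Set (ℕ → Bool)) (hV : V ∈ nhds y) :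
    ∃ m, 0 < m ∧ {z : ℕ → Bool | ∀ i < m, z i = y i} ⊆ V := by
  rw [nhds_pi, Filter.mem_pi] at hV
  obtain ⟨I, hI, t, ht, hsub⟩ := hV
  obtain ⟨m, hm⟩ := hI.bddAbove
  refine ⟨m + 1, Nat.succ_pos _, fun z hz => hsub fun i hi => ?_⟩
  have : z i = y i := hz i (Nat.lt_succ_of_le (hm hi))
  rw [this]; exact mem_of_mem_nhds (ht i)

/-- Cylinders are neighborhoods. -/
lemma cylinder_mem_nhds (y : ℕ → Bool) (m : ℕ) :
    {z : ℕ → Bool | ∀ i < m, z i = y i} ∈ nhds y := by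
  have : {z : ℕ → Bool | ∀ i < m, z i = y i}
      = ⋂ i ∈ Finset.range m, (fun z : ℕ → Bool => z i) ⁻¹' {y i} := by
    ext z; simp
  rw [this]
  exact Filter.biInter_finset_mem _ |>.2 fun i _ =>
    (continuous_apply i).continuousAt.preimage_mem_nhds (by simp)

/-- Parameters of the construction: stage `j` writes `cop j` copies of the prefix of
length `ell j`. -/
private def ell (j : ℕ) : ℕ := (Nat.unpair j).1 + 1
private def cop (j : ℕ) : ℕ := (Nat.unpair j).2 + 1
private def len (j : ℕ) : ℕ := ell j * cop j

/-- An abstract "gap function": `f j E` is a position `≥ E` where stage `j` may start. -/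
structure GapFun where
  f : ℕ → ℕ → ℕ
  le : ∀ j E, E ≤ f j E

/-- End of the written part after stage `j`. -/
def stE (G : GapFun) : ℕ → ℕ
  | 0 => 1
  | j+1 => G.f j (stE G j + ell j + 1) + len j

/-- Start of stage `j`. -/
def stS (G : GapFun) (j : ℕ) : ℕ := G.f j (stE G j + ell j + 1)

lemma ell_pos (j : ℕ) : 0 < ell j := Nat.succ_pos _

lemma ell_le_len (j : ℕ) : ell j ≤ len j := Nat.le_mul_of_pos_right _ (Nat.succ_pos _)

lemma stS_ge (G : GapFun) (j : ℕ) : stE G j + ell j + 1 ≤ stS G j := G.le _ _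

lemma stE_succ (G : GapFun) (j : ℕ) : stE G (j+1) = stS G j + len j := rfl

lemma ell_lt_stS (G : GapFun) (j : ℕ) : ell j < stS G j := by
  have := stS_ge G j; omega

/-- The constructed point of Cantor space: `true` at `0`; inside the region of stage `j`
it repeats the prefix of length `ell j`; `false` elsewhere. -/
noncomputable def yseq (G : GapFun) (n : ℕ) : Bool :=
  if n = 0 then true
  else haveI := Classical.propDecidable (∃ j, stS G j ≤ n ∧ n < stS G j + len j)
  if h : ∃ j, stS G j ≤ n ∧ n < stS G j + len j then
    yseq G ((n - stS G (Nat.find h)) % ell (Nat.find h))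
  else false
  termination_by n
  decreasing_by
    have h1 := (Nat.find_spec h).1
    have h2 := ell_lt_stS G (Nat.find h)
    have h3 := Nat.mod_lt (n - stS G (Nat.find h)) (ell_pos (Nat.find h))
    omega

open Classical in
lemma yseq_eq (G : GapFun) (n : ℕ) : yseq G n =
    if n = 0 then true
    else if h : ∃ j, stS G j ≤ n ∧ n < stS G j + len j then
      yseq G ((n - stS G (Nat.find h)) % ell (Nat.find h))
    else false := by
  rw [yseq]

lemma yseq_zero (G : GapFun) : yseq G 0 = true := by rw [yseq_eq]; simp

lemma stE_mono (G : GapFun) : Monotone (stE G) := by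
  apply monotone_nat_of_le_succ
  intro j
  have h1 := stS_ge G j
  rw [stE_succ]
  omega

lemma stE_le_stS (G : GapFun) (j : ℕ) : stE G j ≤ stS G j := by
  have := stS_ge G j; omega

/-- Regions are ordered: region `j` ends before region `j'` starts, for `j < j'`. -/
lemma region_order (G : GapFun) {j j' : ℕ} (h : j < j') :
    stS G j + len j ≤ stS G j' := by
  calc stS G j + len j = stE G (j+1) := (stE_succ G j).symm
    _ ≤ stE G j' := stE_mono G h
    _ ≤ stS G j' := stE_le_stS G j'

/-- Uniqueness of the region containing `n`. -/
lemma region_unique (G : GapFun) {j j' n : ℕ}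
    (h1 : stS G j ≤ n) (h2 : n < stS G j + len j)
    (h3 : stS G j' ≤ n) (h4 : n < stS G j' + len j') : j = j' := by
  rcases lt_trichotomy j j' with h | h | h
  · have := region_order G h; omega
  · exact h
  · have := region_order G h; omega

/-- The right endpoint of a region is in no region. -/
lemma endpoint_not_mem (G : GapFun) (j j' : ℕ) :
    ¬ (stS G j' ≤ stS G j + len j ∧ stS G j + len j < stS G j' + len j') := by
  rintro ⟨h1, h2⟩
  rcases lt_trichotomy j j' with h | h | h
  · have h3 := region_order G h
    have h4 := stS_ge G j'
    have h5 : stE G (j+1) ≤ stE G j' := stE_mono G h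
    rw [stE_succ] at h5
    omega
  · subst h; omega
  · have := region_order G h; omega

/-- The copy property: inside region `j`, `yseq` repeats the prefix of length `ell j`. -/
lemma yseq_copy (G : GapFun) {j q r : ℕ} (hr : r < ell j) (hq : q < cop j) :
    yseq G (stS G j + (q * ell j + r)) = yseq G r := by
  set n := stS G j + (q * ell j + r) with hn
  have hlt : q * ell j + r < len j := by
    calc q * ell j + r < q * ell j + ell j := by omega
      _ = (q + 1) * ell j := by ring
      _ ≤ cop j * ell j := Nat.mul_le_mul_right _ (by omega)
      _ = len j := by rw [len]; ring
  have hmem : stS G j ≤ n ∧ n < stS G j + len j := ⟨by omega, by omega⟩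
  have hex : ∃ j', stS G j' ≤ n ∧ n < stS G j' + len j' := ⟨j, hmem⟩
  have hne : n ≠ 0 := by have := ell_lt_stS G j; omega
  rw [yseq_eq, if_neg hne, dif_pos hex]
  have hj : Nat.find hex = j := by
    have hspec := Nat.find_spec hex
    exact region_unique G hspec.1 hspec.2 hmem.1 hmem.2
  rw [hj]
  have h6 : n - stS G j = q * ell j + r := by omega
  rw [h6]
  have h7 : (q * ell j + r) % ell j = r := by
    rw [Nat.add_comm, Nat.add_mul_mod_self_right, Nat.mod_eq_of_lt hr]
  rw [h7]

/-- The support of `yseq` is `{0}` together with the regions. -/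
lemma yseq_support (G : GapFun) {n : ℕ} (h : yseq G n = true) :
    n = 0 ∨ ∃ j, stS G j ≤ n ∧ n < stS G j + len j := by
  by_cases hn : n = 0
  · exact Or.inl hn
  rw [yseq_eq, if_neg hn] at h
  by_cases hex : ∃ j, stS G j ≤ n ∧ n < stS G j + len j
  · exact Or.inr hex
  · rw [dif_neg hex] at h; exact absurd h (by simp)

lemma ps_of_subset {S₁ S₂ A : Set ℕ} (h1 : Syndetic S₁) (h2 : Thick S₂)
    (h : S₁ ∩ S₂ ⊆ A) : PiecewiseSyndetic A := by
  refine ⟨S₁ ∪ A, S₂ ∪ A, ?_, ?_, ?_⟩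
  · obtain ⟨N, hN⟩ := h1
    exact ⟨N, fun m => by obtain ⟨k, hk, h⟩ := hN m; exact ⟨k, Or.inl hk, h⟩⟩
  · intro n; obtain ⟨m, hm⟩ := h2 n; exact ⟨m, fun i hi => Or.inl (hm i hi)⟩
  · ext n
    constructor
    · intro hn; exact ⟨Or.inr hn, Or.inr hn⟩
    · rintro ⟨h1' | h1', h2' | h2'⟩ <;> first | assumption | exact h ⟨h1', h2'⟩

lemma ps_mono {A B : Set ℕ} (hAB : A ⊆ B) (hA : PiecewiseSyndetic A) :
    PiecewiseSyndetic B := by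
  obtain ⟨S₁, S₂, h1, h2, rfl⟩ := hA
  exact ps_of_subset h1 h2 hAB

lemma ell_pair (a b : ℕ) : ell (Nat.pair a b) = a + 1 := by simp [ell]
lemma cop_pair (a b : ℕ) : cop (Nat.pair a b) = b + 1 := by simp [cop]

/-- The occurrence set of the length-`m` prefix of `yseq G` is piecewise syndetic. -/
lemma occ_ps (G : GapFun) (m : ℕ) (hm : 0 < m) :
    PiecewiseSyndetic {n : ℕ | ∀ r < m, yseq G (n + r) = yseq G r} := by
  set D := {n : ℕ | ∀ r < m, yseq G (n + r) = yseq G r} with hD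
  set jt : ℕ → ℕ := fun t => Nat.pair (m-1) t with hjt
  have hell : ∀ t, ell (jt t) = m := fun t => by rw [hjt, ell_pair]; omega
  have hcop : ∀ t, cop (jt t) = t + 1 := fun t => cop_pair _ _
  have hlen : ∀ t, len (jt t) = m * (t+1) := fun t => by
    rw [len, hell, hcop]
  set S₂ := ⋃ t : ℕ, Set.Ico (stS G (jt t)) (stS G (jt t) + len (jt t)) with hS₂
  have hrun : ∀ t q, q < t + 1 → stS G (jt t) + q * m ∈ D := by
    intro t q hq
    intro r hr
    have : stS G (jt t) + q * m + r = stS G (jt t) + (q * ell (jt t) + r) := by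
      rw [hell]; ring
    rw [this]
    exact yseq_copy G (by rw [hell]; exact hr) (by rw [hcop]; exact hq)
  refine ps_of_subset (S₁ := D ∪ S₂ᶜ) (S₂ := S₂) ?_ ?_ ?_
  · -- syndetic with bound m
    refine ⟨m, fun p => ?_⟩
    by_cases hp : p ∈ S₂
    · obtain ⟨t, ht⟩ := Set.mem_iUnion.1 hp
      rw [Set.mem_Ico] at ht
      set s := stS G (jt t) with hs
      set o := p - s with ho
      set q := o / m + 1 with hq
      set k := s + q * m with hk
      have hdm : m * (o / m) + o % m = o := Nat.div_add_mod o m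
      have hmod : o % m < m := Nat.mod_lt _ hm
      have hqm : q * m = m * (o / m) + m := by rw [hq]; ring
      have hpk : p ≤ k := by omega
      have hkp : k ≤ p + m := by omega
      have hqt : q ≤ t + 1 := by
        have : o / m < t + 1 := by
          apply Nat.div_lt_of_lt_mul
          have := hlen t; omega
        omega
      refine ⟨k, ?_, hpk, hkp⟩
      rcases Nat.lt_or_ge q (t+1) with hq1 | hq1
      · exact Or.inl (hrun t q hq1)
      · have hq2 : q = t + 1 := by omega
        have hkend : k ∉ S₂ := by
          intro hkS
          obtain ⟨t', ht'⟩ := Set.mem_iUnion.1 hkS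
          rw [Set.mem_Ico] at ht'
          have hke : k = stS G (jt t) + len (jt t) := by
            have h5 : q * m = m * (t + 1) := by rw [hq2, Nat.mul_comm]
            have h6 := hlen t
            omega
          exact endpoint_not_mem G (jt t) (jt t') (by rw [← hke]; exact ht')
        exact Or.inr hkend
    · exact ⟨p, Or.inr hp, le_refl _, by omega⟩
  · -- S₂ thick
    intro n
    refine ⟨stS G (jt n), fun i hi => Set.mem_iUnion.2 ⟨n, ?_⟩⟩
    rw [Set.mem_Ico]
    have : i < len (jt n) := by
      have h6 := hlen n
      have : n + 1 ≤ m * (n+1) := Nat.le_mul_of_pos_left _ hm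
      omega
    omega
  · rintro n ⟨h1 | h1, h2⟩
    · exact h1
    · exact absurd h2 h1

lemma prodmap_iterate {α β : Type} (T : α → α) (S : β → β) (n : ℕ) :
    (Prod.map T S)^[n] = Prod.map T^[n] S^[n] := by
  induction n with
  | zero => simp
  | succ k ih =>
    rw [Function.iterate_succ, Function.iterate_succ, Function.iterate_succ, ih,
      Prod.map_comp_map]

/-- If all return-time sets of `x` are syndetic, then `x` is a minimal point. -/
lemma minimal_of_syndetic {X : Type} [MetricSpace X] [CompactSpace X] (T : X → X)
    (hc : Continuous T) (x : X)
    (hs : ∀ U ∈ nhds x, Syndetic (retTimes T x U)) : IsMinimalPt T x := by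
  have hmem : ∀ n : ℕ, T^[n] x ∈ orbitClosure T x := fun n => subset_closure ⟨n, rfl⟩
  refine ⟨⟨x, hmem 0⟩, isClosed_closure, ?_, ?_⟩
  · intro z hz
    have h1 : T z ∈ closure (T '' Set.range fun n => T^[n] x) :=
      map_mem_closure hc hz (Set.mapsTo_image _ _)
    refine closure_mono ?_ h1
    rintro w ⟨v, ⟨n, rfl⟩, rfl⟩
    exact ⟨n + 1, Function.iterate_succ_apply' T n x⟩
  · intro B hBsub hBne hBcl hBmap
    have hxB : x ∈ B := by
      by_contra hxB
      have hd : 0 < Metric.infDist x B := (hBcl.notMem_iff_infDist_pos hBne).1 hxB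
      set d := Metric.infDist x B with hddef
      obtain ⟨N, hN⟩ := hs (Metric.ball x (d/2)) (Metric.ball_mem_nhds x (by linarith))
      have hCcl : IsClosed (⋃ g ∈ Finset.range (N+1),
          T^[g] ⁻¹' Metric.closedBall x (d/2)) :=
        isClosed_biUnion_finset fun g _ => Metric.isClosed_closedBall.preimage (hc.iterate g)
      have horb : (Set.range fun n => T^[n] x)
          ⊆ ⋃ g ∈ Finset.range (N+1), T^[g] ⁻¹' Metric.closedBall x (d/2) := by
        rintro w ⟨n, rfl⟩
        obtain ⟨k, hk, hnk, hkn⟩ := hN n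
        refine Set.mem_biUnion (Finset.mem_range.2 (show k - n < N + 1 by omega)) ?_
        rw [Set.mem_preimage, ← Function.iterate_add_apply, show k - n + n = k by omega]
        exact Metric.ball_subset_closedBall hk
      obtain ⟨z, hz⟩ := hBne
      have hzC := closure_minimal horb hCcl (hBsub hz)
      simp only [Set.mem_iUnion, Finset.mem_range, Set.mem_preimage] at hzC
      obtain ⟨g, hg, hzg⟩ := hzC
      have hTgz : T^[g] z ∈ B := (hBmap.iterate g) hz
      have h2 : d ≤ dist x (T^[g] z) := Metric.infDist_le_dist_of_mem hTgz
      have h3 : dist (T^[g] z) x ≤ d/2 := Metric.mem_closedBall.1 hzg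
      rw [dist_comm] at h3
      linarith
    refine subset_antisymm hBsub (closure_minimal ?_ hBcl)
    rintro w ⟨n, rfl⟩
    exact (hBmap.iterate n) hxB

end Aux6

/-- an `F_ps`-product recurrent point is minimal. -/
theorem statement_6 {X : Type} [MetricSpace X] [CompactSpace X] (T : X → X)
    (hTc : Continuous T) (hTs : Function.Surjective T) (x : X)
    (hx : FProductRecurrent {A : Set ℕ | PiecewiseSyndetic A} T x) :
    IsMinimalPt T x := by
  apply minimal_of_syndetic T hTc x
  intro U hU
  by_contra hns
  rw [Syndetic] at hns
  push_neg at hns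
  -- the complement of the return-time set contains arbitrarily long intervals,
  -- arbitrarily far out
  have gaps : ∀ N E : ℕ, ∃ s : ℕ, E ≤ s ∧ ∀ i ≤ N, s + i ∉ retTimes T x U := by
    intro N E
    obtain ⟨m, hm⟩ := hns (N + E)
    refine ⟨max m E, le_max_right _ _, fun i hi hmemA => ?_⟩
    have h1 := le_max_left m E
    have h2 : max m E ≤ m + E := max_le (Nat.le_add_right _ _) (Nat.le_add_left _ _)
    have h3 := hm (max m E + i) hmemA (by omega)
    omega
  choose gf hgf1 hgf2 using gaps
  set G : GapFun := ⟨fun j E => gf (len j) E, fun j E => hgf1 (len j) E⟩ with hG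
  set y : ℕ → Bool := yseq G with hy
  set Sh : (ℕ → Bool) → (ℕ → Bool) := fun z n => z (n+1) with hSh
  have hcont : Continuous Sh := continuous_pi fun n => continuous_apply (n+1)
  have hsurj : Function.Surjective Sh :=
    fun f => ⟨fun n => Nat.rec true (fun k _ => f k) n, rfl⟩
  have hiter : ∀ (n : ℕ) (z : ℕ → Bool), Sh^[n] z = fun i => z (i + n) := by
    intro n
    induction n with
    | zero => intro z; rfl
    | succ k ih =>
      intro z
      rw [Function.iterate_succ_apply, ih]
      rfl
  have hy0 : y 0 = true := yseq_zero G
  -- `y` is F_ps-recurrent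
  have hyrec : FRecurrentPt {A : Set ℕ | PiecewiseSyndetic A} Sh y := by
    intro V hV
    obtain ⟨m, hm, hcyl⟩ := cylinder_mem_of_nhds y V hV
    show PiecewiseSyndetic (retTimes Sh y V)
    refine ps_mono ?_ (occ_ps G m hm)
    intro n hn
    show Sh^[n] y ∈ V
    apply hcyl
    intro i hi
    rw [hiter]
    show y (i + n) = y i
    rw [Nat.add_comm]
    exact hn i hi
  have hrec := hx (ℕ → Bool) Sh hcont hsurj y hyrec
  have hV1 : {z : ℕ → Bool | z 0 = true} ∈ nhds y := by
    have hop : IsOpen {z : ℕ → Bool | z 0 = true} := by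
      have : {z : ℕ → Bool | z 0 = true} = (fun z : ℕ → Bool => z 0) ⁻¹' {true} := rfl
      rw [this]
      exact (continuous_apply 0).isOpen_preimage _ (isOpen_discrete _)
    exact hop.mem_nhds hy0
  have hinf := hrec (U ×ˢ {z : ℕ → Bool | z 0 = true}) (prod_mem_nhds hU hV1)
  have hfin : retTimes (Prod.map T Sh) (x, y) (U ×ˢ {z : ℕ → Bool | z 0 = true})
      ⊆ {0} := by
    intro n hn
    have hn' : (Prod.map T Sh)^[n] (x, y) ∈ U ×ˢ {z : ℕ → Bool | z 0 = true} := hn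
    rw [prodmap_iterate] at hn'
    have hnU : T^[n] x ∈ U := hn'.1
    have hnV : (Sh^[n] y) 0 = true := hn'.2
    have hyn : y n = true := by
      rw [hiter] at hnV
      simpa using hnV
    rcases yseq_support G hyn with h0 | ⟨j, hj1, hj2⟩
    · exact h0
    · exfalso
      have hnotA : stS G j + (n - stS G j) ∉ retTimes T x U := by
        have h5 : n - stS G j ≤ len j := by omega
        exact hgf2 (len j) (stE G j + ell j + 1) (n - stS G j) h5
      apply hnotA
      rw [show stS G j + (n - stS G j) = n by omega]
      exact hnU
  exact hinf (Set.Finite.subset (Set.finite_singleton 0) hfin)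


end PaperFormal
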